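/- Let (W,S) be the affine Weyl group of a reduced root system acting on the affine roots Σ, with fundamental alcove C, and let F', F be facets in the closure of C. For w ∈ W, the length of the representative {}_{F'}w^F (the maximal-length element among minimal coset representatives (vw)^F for v ∈ W_{F'}) equals the number of affine roots α ∈ Σ \ Σ(F) with α(C) > 0 and w(α)(F') ≤ 0. -/

import Mathlib

/-- The length of an element `g` of the affine Weyl group, realized as a permutation of the
vector space `V`: the number of affine roots `α = a + k` (with `a ∈ Σ₀ = pos ∪ (-pos)`,
`k ∈ ℤ`) with `α(C) > 0` and `g(α)(C) < 0`, where `g(α)(x) = α(g⁻¹ x)`. -/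
noncomputable def affineLength {V : Type*} [AddCommGroup V] [Module ℝ V]
    (pos : Finset (Module.Dual ℝ V)) (C : Set V) (g : Equiv.Perm V) : ℕ :=
  Set.ncard {p : Module.Dual ℝ V × ℤ |
    (p.1 ∈ pos ∨ -p.1 ∈ pos) ∧
    (∀ x ∈ C, 0 < p.1 x + (p.2 : ℝ)) ∧
    (∀ x ∈ C, p.1 (g⁻¹ x) + (p.2 : ℝ) < 0)}

namespace Wald
variable {V : Type*} [AddCommGroup V] [Module ℝ V]

def vp (p : Module.Dual ℝ V × ℤ) (x : V) : ℝ := p.1 x + p.2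

theorem pair_ext {p q : Module.Dual ℝ V × ℤ} (h : ∀ x, vp p x = vp q x) : p = q := by
  have h0 := h 0
  simp only [vp, map_zero, zero_add] at h0
  have h2 : p.2 = q.2 := by exact_mod_cast h0
  have h1 : p.1 = q.1 := by
    ext x
    have := h x
    simp only [vp, h2] at this
    linarith
  exact Prod.ext h1 h2

def Rt (pos : Finset (Module.Dual ℝ V)) (p : Module.Dual ℝ V × ℤ) : Prop :=
  p.1 ∈ pos ∨ -p.1 ∈ pos


def PosC (C : Set V) (p : Module.Dual ℝ V × ℤ) : Prop := ∀ x ∈ C, 0 < vp p x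

def NegC (C : Set V) (p : Module.Dual ℝ V × ℤ) : Prop := ∀ x ∈ C, vp p x < 0

theorem posC_or_negC {pos : Finset (Module.Dual ℝ V)} {C : Set V}
    (hCpos : ∀ a ∈ pos, ∀ x ∈ C, 0 < a x ∧ a x < 1)
    {p : Module.Dual ℝ V × ℤ} (hp : Rt pos p) : PosC C p ∨ NegC C p := by
  rcases hp with h | h
  · rcases le_or_gt 0 p.2 with hk | hk
    · left; intro x hx
      have h1 := (hCpos p.1 h x hx).1
      have h2 : (0:ℝ) ≤ (p.2 : ℝ) := by exact_mod_cast hk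
      simp only [vp]; linarith
    · right; intro x hx
      have hk2 : p.2 + 1 ≤ 0 := Int.lt_iff_add_one_le.mp hk
      have hk' : (p.2 : ℝ) ≤ -1 := by
        have h3 := (@Int.cast_le ℝ _ _ _).mpr hk2; push_cast at h3; linarith
      have := (hCpos p.1 h x hx).2
      simp only [vp]; linarith
  · rcases le_or_gt 1 p.2 with hk | hk
    · left; intro x hx
      have h2 := (hCpos (-p.1) h x hx).2
      have hk' : (1:ℝ) ≤ (p.2 : ℝ) := by exact_mod_cast hk
      simp only [LinearMap.neg_apply] at h2
      simp only [vp]; linarith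
    · right; intro x hx
      have h1 := (hCpos (-p.1) h x hx).1
      have hk2 : p.2 + 1 ≤ 1 := Int.lt_iff_add_one_le.mp hk
      have hk' : (p.2 : ℝ) ≤ 0 := by
        have h3 := (@Int.cast_le ℝ _ _ _).mpr hk2; push_cast at h3; linarith
      simp only [LinearMap.neg_apply] at h1
      simp only [vp]; linarith

theorem not_posC_negC {C : Set V} (hC : C.Nonempty) {p : Module.Dual ℝ V × ℤ}
    (h1 : PosC C p) (h2 : NegC C p) : False := by
  obtain ⟨x, hx⟩ := hC
  exact absurd (h1 x hx) (not_lt.mpr (le_of_lt (h2 x hx)))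

theorem negC_of_not_posC {pos : Finset (Module.Dual ℝ V)} {C : Set V}
    (hCpos : ∀ a ∈ pos, ∀ x ∈ C, 0 < a x ∧ a x < 1)
    {p : Module.Dual ℝ V × ℤ} (hp : Rt pos p) (h : ¬ PosC C p) : NegC C p := by
  rcases posC_or_negC hCpos hp with h' | h'
  · exact absurd h' h
  · exact h'

section Grp
variable (pos : Finset (Module.Dual ℝ V)) (cv : Module.Dual ℝ V → V)
  (r : Module.Dual ℝ V → ℤ → Equiv.Perm V)

variable {pos cv r}

theorem r_invol (hcv : ∀ a ∈ pos, a (cv a) = 2)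
    (hr : ∀ a k (x : V), r a k x = x - (a x + (k : ℝ)) • cv a)
    {a : Module.Dual ℝ V} (ha : a ∈ pos) (k : ℤ) : r a k * r a k = 1 := by
  ext x
  have h1 := hr a k x
  have h2 := hr a k (r a k x)
  have hv : a (r a k x) + (k:ℝ) = -(a x + k) := by
    rw [h1]; simp [map_sub, map_smul, hcv a ha]; ring
  show r a k (r a k x) = x
  rw [h2, hv, h1, neg_smul, sub_neg_eq_add]
  abel

theorem r_inv_eq (hcv : ∀ a ∈ pos, a (cv a) = 2)
    (hr : ∀ a k (x : V), r a k x = x - (a x + (k : ℝ)) • cv a)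
    {a : Module.Dual ℝ V} (ha : a ∈ pos) (k : ℤ) : (r a k)⁻¹ = r a k :=
  inv_eq_of_mul_eq_one_right (r_invol hcv hr ha k)

/-- the affine Weyl group -/
theorem mem_submonoid_of_mem_W (hcv : ∀ a ∈ pos, a (cv a) = 2)
    (hr : ∀ a k (x : V), r a k x = x - (a x + (k : ℝ)) • cv a)
    {g : Equiv.Perm V}
    (hg : g ∈ Subgroup.closure {σ : Equiv.Perm V | ∃ a ∈ pos, ∃ k : ℤ, σ = r a k}) :
    g ∈ Submonoid.closure {σ : Equiv.Perm V | ∃ a ∈ pos, ∃ k : ℤ, σ = r a k} := by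
  set S : Set (Equiv.Perm V) := {σ | ∃ a ∈ pos, ∃ k : ℤ, σ = r a k} with hS
  have hSinv : S ∪ S⁻¹ = S := by
    apply Set.union_eq_self_of_subset_right
    intro σ hσ
    obtain ⟨a, ha, k, hk⟩ := hσ
    have : σ = r a k := by
      have : σ⁻¹ = r a k := hk
      rw [← inv_inv σ, this, r_inv_eq hcv hr ha]
    exact ⟨a, ha, k, this⟩
  have := (Subgroup.mem_toSubmonoid (Subgroup.closure S) (x := g)).mpr hg
  rwa [Subgroup.closure_toSubmonoid, hSinv] at this

theorem exists_image (hcv : ∀ a ∈ pos, a (cv a) = 2)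
    (hcry : ∀ a ∈ pos, ∀ b : Module.Dual ℝ V, (b ∈ pos ∨ -b ∈ pos) → ∃ n : ℤ, b (cv a) = n)
    (hinv : ∀ a ∈ pos, ∀ b : Module.Dual ℝ V, (b ∈ pos ∨ -b ∈ pos) →
      ∃ c : Module.Dual ℝ V, (c ∈ pos ∨ -c ∈ pos) ∧ ∀ x : V, b x - a x * b (cv a) = c x)
    (hr : ∀ a k (x : V), r a k x = x - (a x + (k : ℝ)) • cv a)
    {g : Equiv.Perm V}
    (hg : g ∈ Subgroup.closure {σ : Equiv.Perm V | ∃ a ∈ pos, ∃ k : ℤ, σ = r a k})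
    {p : Module.Dual ℝ V × ℤ} (hp : Rt pos p) :
    ∃ q, Rt pos q ∧ ∀ x, vp q x = vp p (g⁻¹ x) := by
  have hg' := mem_submonoid_of_mem_W hcv hr hg
  clear hg
  revert p
  induction hg' using Submonoid.closure_induction with
  | one => intro p hp; exact ⟨p, hp, by simp⟩
  | mem σ hσ =>
      intro p hp
      obtain ⟨a, ha, k, rfl⟩ := hσ
      obtain ⟨n, hn⟩ := hcry a ha p.1 hp
      obtain ⟨c, hc, hcval⟩ := hinv a ha p.1 hp
      refine ⟨(c, p.2 - k * n), hc, fun x => ?_⟩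
      rw [r_inv_eq hcv hr ha]
      simp only [vp, hr a k x, map_sub, map_smul, smul_eq_mul, hn, ← hcval x]
      push_cast
      ring
  | mul g h hgc hhc ihg ihh =>
      intro p hp
      obtain ⟨q₁, hq₁, hq₁v⟩ := ihh hp
      obtain ⟨q₂, hq₂, hq₂v⟩ := ihg hq₁
      refine ⟨q₂, hq₂, fun x => ?_⟩
      rw [hq₂v x, hq₁v (g⁻¹ x), mul_inv_rev]
      rfl


def Wgp (pos : Finset (Module.Dual ℝ V)) (r : Module.Dual ℝ V → ℤ → Equiv.Perm V) :
    Subgroup (Equiv.Perm V) :=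
  Subgroup.closure {σ : Equiv.Perm V | ∃ a ∈ pos, ∃ k : ℤ, σ = r a k}

def WKgp (pos : Finset (Module.Dual ℝ V)) (r : Module.Dual ℝ V → ℤ → Equiv.Perm V)
    (K : Set V) : Subgroup (Equiv.Perm V) :=
  Subgroup.closure {σ : Equiv.Perm V | ∃ a ∈ pos, ∃ k : ℤ, (∀ x ∈ K, a x + (k:ℝ) = 0) ∧ σ = r a k}

theorem wk_le_w (K : Set V) : WKgp pos r K ≤ Wgp pos r := by
  apply Subgroup.closure_mono
  rintro σ ⟨a, ha, k, -, rfl⟩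
  exact ⟨a, ha, k, rfl⟩

open Classical in
noncomputable def act (pos : Finset (Module.Dual ℝ V)) (g : Equiv.Perm V)
    (p : Module.Dual ℝ V × ℤ) : Module.Dual ℝ V × ℤ :=
  if h : ∃ q, Rt pos q ∧ ∀ x, vp q x = vp p (g⁻¹ x) then h.choose else p

section ActSpec
variable (hcv : ∀ a ∈ pos, a (cv a) = 2)
  (hcry : ∀ a ∈ pos, ∀ b : Module.Dual ℝ V, (b ∈ pos ∨ -b ∈ pos) → ∃ n : ℤ, b (cv a) = n)
  (hinv : ∀ a ∈ pos, ∀ b : Module.Dual ℝ V, (b ∈ pos ∨ -b ∈ pos) →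
      ∃ c : Module.Dual ℝ V, (c ∈ pos ∨ -c ∈ pos) ∧ ∀ x : V, b x - a x * b (cv a) = c x)
  (hr : ∀ a k (x : V), r a k x = x - (a x + (k : ℝ)) • cv a)

include hcv hcry hinv hr

theorem act_spec {g : Equiv.Perm V} (hg : g ∈ Wgp pos r)
    {p : Module.Dual ℝ V × ℤ} (hp : Rt pos p) :
    Rt pos (act pos g p) ∧ ∀ x, vp (act pos g p) x = vp p (g⁻¹ x) := by
  have hP : ∃ q, Rt pos q ∧ ∀ x, vp q x = vp p (g⁻¹ x) :=
    exists_image hcv hcry hinv hr hg hp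
  unfold act
  rw [dif_pos hP]
  exact hP.choose_spec

theorem act_rt {g : Equiv.Perm V} (hg : g ∈ Wgp pos r)
    {p : Module.Dual ℝ V × ℤ} (hp : Rt pos p) : Rt pos (act pos g p) :=
  (act_spec hcv hcry hinv hr hg hp).1

theorem act_vp {g : Equiv.Perm V} (hg : g ∈ Wgp pos r)
    {p : Module.Dual ℝ V × ℤ} (hp : Rt pos p) (x : V) :
    vp (act pos g p) x = vp p (g⁻¹ x) :=
  (act_spec hcv hcry hinv hr hg hp).2 x

theorem act_inv_act {g : Equiv.Perm V} (hg : g ∈ Wgp pos r)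
    {p : Module.Dual ℝ V × ℤ} (hp : Rt pos p) : act pos g⁻¹ (act pos g p) = p := by
  apply pair_ext
  intro x
  rw [act_vp hcv hcry hinv hr (inv_mem hg) (act_rt hcv hcry hinv hr hg hp), inv_inv,
    act_vp hcv hcry hinv hr hg hp]
  simp

theorem act_act_inv {g : Equiv.Perm V} (hg : g ∈ Wgp pos r)
    {p : Module.Dual ℝ V × ℤ} (hp : Rt pos p) : act pos g (act pos g⁻¹ p) = p := by
  have := act_inv_act hcv hcry hinv hr (inv_mem hg) hp
  rwa [inv_inv] at this

theorem act_injOn {g : Equiv.Perm V} (hg : g ∈ Wgp pos r)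
    {p q : Module.Dual ℝ V × ℤ} (hp : Rt pos p) (hq : Rt pos q)
    (h : act pos g p = act pos g q) : p = q := by
  rw [← act_inv_act hcv hcry hinv hr hg hp, h, act_inv_act hcv hcry hinv hr hg hq]

end ActSpec

theorem wk_fix {K : Set V} (hr : ∀ a k (x : V), r a k x = x - (a x + (k : ℝ)) • cv a)
    {g : Equiv.Perm V} (hg : g ∈ WKgp pos r K) : ∀ x ∈ K, g x = x := by
  induction hg using Subgroup.closure_induction with
  | mem σ hσ =>
      obtain ⟨a, ha, k, hvan, rfl⟩ := hσ
      intro x hx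
      rw [hr, hvan x hx, zero_smul, sub_zero]
  | one => intro x hx; rfl
  | mul g h _ _ ihg ihh =>
      intro x hx
      show g (h x) = x
      rw [ihh x hx, ihg x hx]
  | inv g _ ih =>
      intro x hx
      conv_lhs => rw [← ih x hx]
      exact Equiv.symm_apply_apply g x

/-- values on `K` are unchanged by `act` of elements of `W_K` -/
theorem act_vp_on_K {K : Set V}
    (hcv : ∀ a ∈ pos, a (cv a) = 2)
    (hcry : ∀ a ∈ pos, ∀ b : Module.Dual ℝ V, (b ∈ pos ∨ -b ∈ pos) → ∃ n : ℤ, b (cv a) = n)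
    (hinv : ∀ a ∈ pos, ∀ b : Module.Dual ℝ V, (b ∈ pos ∨ -b ∈ pos) →
      ∃ c : Module.Dual ℝ V, (c ∈ pos ∨ -c ∈ pos) ∧ ∀ x : V, b x - a x * b (cv a) = c x)
    (hr : ∀ a k (x : V), r a k x = x - (a x + (k : ℝ)) • cv a)
    {g : Equiv.Perm V} (hg : g ∈ WKgp pos r K)
    {p : Module.Dual ℝ V × ℤ} (hp : Rt pos p) :
    ∀ x ∈ K, vp (act pos g p) x = vp p x := by
  intro x hx
  rw [act_vp hcv hcry hinv hr (wk_le_w K hg) hp x,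
    wk_fix hr (inv_mem hg) x hx]

theorem van_finite {K : Set V} (hK : K.Nonempty) :
    {p : Module.Dual ℝ V × ℤ | Rt pos p ∧ (∀ x ∈ K, vp p x = 0)}.Finite := by
  obtain ⟨x₀, hx₀⟩ := hK
  apply Set.Finite.of_finite_image (f := Prod.fst)
  · apply Set.Finite.subset (Set.Finite.union (pos.finite_toSet) (pos.finite_toSet.image (fun a => -a)))
    rintro b ⟨p, ⟨hrt, -⟩, rfl⟩
    rcases hrt with h | h
    · exact Or.inl h
    · exact Or.inr ⟨-p.1, h, by simp⟩
  · rintro p ⟨-, hp⟩ q ⟨-, hq⟩ hpq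
    have h1 := hp x₀ hx₀
    have h2 := hq x₀ hx₀
    simp only [vp] at h1 h2
    rw [hpq] at h1
    have : (p.2 : ℝ) = q.2 := by linarith
    exact Prod.ext hpq (by exact_mod_cast this)

end Grp

section LemA
variable {pos : Finset (Module.Dual ℝ V)} {C : Set V} {cv : Module.Dual ℝ V → V}
  {r : Module.Dual ℝ V → ℤ → Equiv.Perm V}

theorem lemmaA
    (hC : C.Nonempty)
    (hCpos : ∀ a ∈ pos, ∀ x ∈ C, 0 < a x ∧ a x < 1)
    (hcv : ∀ a ∈ pos, a (cv a) = 2)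
    (hcry : ∀ a ∈ pos, ∀ b : Module.Dual ℝ V, (b ∈ pos ∨ -b ∈ pos) → ∃ n : ℤ, b (cv a) = n)
    (hinv : ∀ a ∈ pos, ∀ b : Module.Dual ℝ V, (b ∈ pos ∨ -b ∈ pos) →
      ∃ c : Module.Dual ℝ V, (c ∈ pos ∨ -c ∈ pos) ∧ ∀ x : V, b x - a x * b (cv a) = c x)
    (hr : ∀ a k (x : V), r a k x = x - (a x + (k : ℝ)) • cv a)
    {K : Set V} (hK : K.Nonempty) (y : V)
    (hy : ∀ p : Module.Dual ℝ V × ℤ, Rt pos p → (∀ x ∈ K, vp p x = 0) → vp p y ≠ 0) :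
    ∃ g ∈ WKgp pos r K, ∀ p, Rt pos p → (∀ x ∈ K, vp p x = 0) → PosC C p →
      0 < vp p (g⁻¹ y) := by
  classical
  obtain ⟨x₀, hx₀⟩ := hC
  have hTfin : {p : Module.Dual ℝ V × ℤ | Rt pos p ∧ (∀ x ∈ K, vp p x = 0) ∧ PosC C p}.Finite :=
    (van_finite (pos := pos) hK).subset (by rintro p ⟨h1, h2, h3⟩; exact ⟨h1, h2⟩)
  set Tf : Finset (Module.Dual ℝ V × ℤ) := hTfin.toFinset with hTfdef
  have hmemT : ∀ γ, γ ∈ Tf ↔ (Rt pos γ ∧ (∀ x ∈ K, vp γ x = 0) ∧ PosC C γ) := by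
    intro γ; rw [hTfdef, Set.Finite.mem_toFinset]; rfl
  set hfun : Equiv.Perm V → ℝ := fun u => ∑ γ ∈ Tf, vp γ (u⁻¹ y) with hhfun
  set A : Set ℝ := {t | ∃ u ∈ WKgp pos r K, t = hfun u} with hAdef
  have hSKfin := van_finite (pos := pos) hK
  set SKf : Finset (Module.Dual ℝ V × ℤ) := hSKfin.toFinset with hSKfdef
  have hAfin : A.Finite := by
    apply (Set.finite_range
      (fun f : (↥Tf → ↥SKf) => ∑ γ ∈ Tf.attach, vp ((f γ : Module.Dual ℝ V × ℤ)) y)).subset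
    rintro t ⟨u, hu, rfl⟩
    have hmem : ∀ γ : ↥Tf, act pos u γ.1 ∈ SKf := by
      intro γ
      have hγ := (hmemT γ.1).mp γ.2
      rw [hSKfdef, Set.Finite.mem_toFinset]
      exact ⟨act_rt hcv hcry hinv hr (wk_le_w _ hu) hγ.1,
        fun x hx => by rw [act_vp_on_K hcv hcry hinv hr hu hγ.1 x hx]; exact hγ.2.1 x hx⟩
    refine ⟨fun γ => ⟨act pos u γ.1, hmem γ⟩, ?_⟩
    show ∑ γ ∈ Tf.attach, vp (act pos u γ.1) y = ∑ γ ∈ Tf, vp γ (u⁻¹ y)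
    rw [← Finset.sum_attach Tf (fun γ => vp γ (u⁻¹ y))]
    apply Finset.sum_congr rfl
    intro γ _
    exact act_vp hcv hcry hinv hr (wk_le_w _ hu) ((hmemT γ.1).mp γ.2).1 y
  have hAne : A.Nonempty := ⟨hfun 1, 1, one_mem _, rfl⟩
  obtain ⟨t0, ht0A, ht0max⟩ := Set.Finite.exists_maximalFor id A hAfin hAne
  obtain ⟨u0, hu0, ht0⟩ := ht0A
  refine ⟨u0, hu0, ?_⟩
  intro β hβrt hβvan hβpos
  by_contra hle
  push_neg at hle
  have hWu0 : u0 ∈ Wgp pos r := wk_le_w _ hu0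
  have hstrict : vp β (u0⁻¹ y) ≠ 0 := by
    rw [← act_vp hcv hcry hinv hr hWu0 hβrt y]
    exact hy _ (act_rt hcv hcry hinv hr hWu0 hβrt)
      (fun x hx => by rw [act_vp_on_K hcv hcry hinv hr hu0 hβrt x hx]; exact hβvan x hx)
  have hneg : vp β (u0⁻¹ y) < 0 := lt_of_le_of_ne hle hstrict
  obtain ⟨a, ha, k, ε, hε, hβv⟩ :
      ∃ a, a ∈ pos ∧ ∃ k : ℤ, ∃ ε : ℝ, (ε = 1 ∨ ε = -1) ∧
        ∀ x, vp β x = ε * (a x + (k:ℝ)) := by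
    rcases hβrt with hb | hb
    · exact ⟨β.1, hb, β.2, 1, Or.inl rfl, fun x => by simp [vp]⟩
    · refine ⟨-β.1, hb, -β.2, -1, Or.inr rfl, fun x => ?_⟩
      simp only [vp, LinearMap.neg_apply, Int.cast_neg]
      ring
  have hε2 : ε * ε = 1 := by rcases hε with h | h <;> rw [h] <;> norm_num
  have hεne : ε ≠ 0 := by rcases hε with h | h <;> rw [h] <;> norm_num
  have hvanak : ∀ x ∈ K, a x + (k:ℝ) = 0 := by
    intro x hx
    have h0 := hβvan x hx
    rw [hβv x] at h0
    rcases mul_eq_zero.mp h0 with h | h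
    · exact absurd h hεne
    · exact h
  have hgen : r a k ∈ WKgp pos r K := Subgroup.subset_closure ⟨a, ha, k, hvanak, rfl⟩
  have hgenW : r a k ∈ Wgp pos r := Subgroup.subset_closure ⟨a, ha, k, rfl⟩
  have act_gen : ∀ γ : Module.Dual ℝ V × ℤ, Rt pos γ → ∀ x,
      vp (act pos (r a k) γ) x = vp γ x - (a x + (k:ℝ)) * (γ.1 (cv a)) := by
    intro γ hγ x
    rw [act_vp hcv hcry hinv hr hgenW hγ x, r_inv_eq hcv hr ha, hr a k x]
    simp only [vp, map_sub, map_smul, smul_eq_mul]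
    ring
  have eval_cv : ∀ q : Module.Dual ℝ V × ℤ, q.1 (cv a) = vp q (x₀ + cv a) - vp q x₀ := by
    intro q; simp only [vp, map_add]; ring
  have hacv : a (x₀ + cv a) = a x₀ + 2 := by rw [map_add, hcv a ha]
  have f_flip : ∀ γ : Module.Dual ℝ V × ℤ, Rt pos γ →
      (act pos (r a k) γ).1 (cv a) = -(γ.1 (cv a)) := by
    intro γ hγ
    rw [eval_cv (act pos (r a k) γ), act_gen γ hγ, act_gen γ hγ, eval_cv γ, hacv]
    ring
  have act_rtvan : ∀ γ, γ ∈ Tf → Rt pos (act pos (r a k) γ) ∧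
      (∀ x ∈ K, vp (act pos (r a k) γ) x = 0) := by
    intro γ hγ
    have hγ' := (hmemT γ).mp hγ
    exact ⟨act_rt hcv hcry hinv hr hgenW hγ'.1,
      fun x hx => by rw [act_vp_on_K hcv hcry hinv hr hgen hγ'.1 x hx]; exact hγ'.2.1 x hx⟩
  have act_invol : ∀ γ, Rt pos γ → act pos (r a k) (act pos (r a k) γ) = γ := by
    intro γ hγ
    have := act_inv_act hcv hcry hinv hr hgenW hγ
    rwa [r_inv_eq hcv hr ha] at this
  set D : Finset (Module.Dual ℝ V × ℤ) :=
    Tf.filter (fun γ => ¬ PosC C (act pos (r a k) γ)) with hDdef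
  have hDT : D ⊆ Tf := Finset.filter_subset _ _
  have hax₀ : a x₀ + (k:ℝ) ≠ 0 := by
    intro h0
    have := hβpos x₀ hx₀
    rw [hβv x₀, h0, mul_zero] at this
    exact lt_irrefl 0 this
  set f : (Module.Dual ℝ V × ℤ) → ℝ := fun γ => ε * (γ.1 (cv a)) with hfdef
  have sum_nD : ∑ γ ∈ Tf \ D, f γ = 0 := by
    apply Finset.sum_involution (g := fun γ _ => act pos (r a k) γ)
    · intro γ hγ
      have hγT := (Finset.mem_sdiff.mp hγ).1
      have hγrt := ((hmemT γ).mp hγT).1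
      show f γ + f (act pos (r a k) γ) = 0
      rw [hfdef]
      simp only []
      rw [f_flip γ hγrt]
      ring
    · intro γ hγ hfγ
      have hγT := (Finset.mem_sdiff.mp hγ).1
      have hγrt := ((hmemT γ).mp hγT).1
      intro heq
      have h1 := act_gen γ hγrt x₀
      rw [heq] at h1
      have h2 : (a x₀ + (k:ℝ)) * (γ.1 (cv a)) = 0 := by linarith
      rcases mul_eq_zero.mp h2 with h | h
      · exact hax₀ h
      · rw [hfdef] at hfγ; simp only [] at hfγ; rw [h, mul_zero] at hfγ; exact hfγ rfl
    · intro γ hγ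
      obtain ⟨hγT, hγnD⟩ := Finset.mem_sdiff.mp hγ
      have hγ' := (hmemT γ).mp hγT
      have hposσ : PosC C (act pos (r a k) γ) := by
        by_contra hcon
        exact hγnD (Finset.mem_filter.mpr ⟨hγT, hcon⟩)
      have hσT : act pos (r a k) γ ∈ Tf := by
        rw [hmemT]
        exact ⟨(act_rtvan γ hγT).1, (act_rtvan γ hγT).2, hposσ⟩
      rw [Finset.mem_sdiff]
      refine ⟨hσT, ?_⟩
      rw [hDdef, Finset.mem_filter]
      rintro ⟨-, hcon⟩
      rw [act_invol γ hγ'.1] at hcon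
      exact hcon hγ'.2.2
    · intro γ hγ
      have hγT := (Finset.mem_sdiff.mp hγ).1
      exact act_invol γ ((hmemT γ).mp hγT).1
  have hβD : β ∈ D := by
    rw [hDdef, Finset.mem_filter]
    have hβT : β ∈ Tf := (hmemT β).mpr ⟨hβrt, hβvan, hβpos⟩
    refine ⟨hβT, ?_⟩
    have hβcv : β.1 (cv a) = ε * 2 := by
      rw [eval_cv β]
      rw [hβv (x₀ + cv a), hβv x₀, hacv]
      ring
    have hnegσ : NegC C (act pos (r a k) β) := by
      intro x hx
      rw [act_gen β hβrt x, hβcv]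
      have hax : a x + (k:ℝ) = ε * vp β x := by
        rw [hβv x]; rw [← mul_assoc, hε2, one_mul]
      rw [hax]
      have := hβpos x hx
      nlinarith [hε2]
    intro hcon
    exact not_posC_negC ⟨x₀, hx₀⟩ hcon hnegσ
  have hDpos : ∀ γ ∈ D, 0 < f γ := by
    intro γ hγ
    obtain ⟨hγT, hγnpos⟩ := Finset.mem_filter.mp hγ
    have hγ' := (hmemT γ).mp hγT
    have hnegσ : NegC C (act pos (r a k) γ) :=
      negC_of_not_posC hCpos (act_rtvan γ hγT).1 hγnpos
    have h1 := hnegσ x₀ hx₀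
    rw [act_gen γ hγ'.1 x₀] at h1
    have h2 := hγ'.2.2 x₀ hx₀
    have h3 : 0 < (a x₀ + (k:ℝ)) * (γ.1 (cv a)) := by linarith
    have h4 : 0 < ε * (a x₀ + (k:ℝ)) := by rw [← hβv x₀]; exact hβpos x₀ hx₀
    rw [hfdef]
    simp only []
    rcases mul_pos_iff.mp h3 with ⟨hp1, hp2⟩ | ⟨hn1, hn2⟩
    · rcases mul_pos_iff.mp h4 with ⟨he1, -⟩ | ⟨-, hc⟩
      · exact mul_pos he1 hp2
      · linarith
    · rcases mul_pos_iff.mp h4 with ⟨-, hc⟩ | ⟨he1, -⟩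
      · linarith
      · exact mul_pos_of_neg_of_neg he1 hn2
  have hsumD : 0 < ∑ γ ∈ D, f γ := Finset.sum_pos hDpos ⟨β, hβD⟩
  have hsumT : 0 < ∑ γ ∈ Tf, f γ := by
    rw [← Finset.sum_sdiff hDT, sum_nD, zero_add]
    exact hsumD
  -- the contradiction
  set z := u0⁻¹ y with hzdef
  set u1 := u0 * r a k with hu1def
  have hu1 : u1 ∈ WKgp pos r K := mul_mem hu0 hgen
  have hz1 : u1⁻¹ y = r a k z := by
    rw [hu1def, mul_inv_rev, r_inv_eq hcv hr ha]
    rfl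
  have hval : hfun u1 = hfun u0 - (a z + (k:ℝ)) * ∑ γ ∈ Tf, γ.1 (cv a) := by
    rw [hhfun]
    simp only []
    rw [hz1, Finset.mul_sum, ← Finset.sum_sub_distrib]
    apply Finset.sum_congr rfl
    intro γ _
    rw [hr a k z]
    simp only [vp, map_sub, map_smul, smul_eq_mul]
    ring
  have hsum_eq : ∑ γ ∈ Tf, γ.1 (cv a) = ε * ∑ γ ∈ Tf, f γ := by
    rw [Finset.mul_sum]
    apply Finset.sum_congr rfl
    intro γ _
    rw [hfdef]
    simp only []
    rw [← mul_assoc, hε2, one_mul]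
  have haz : a z + (k:ℝ) = ε * vp β z := by
    rw [hβv z, ← mul_assoc, hε2, one_mul]
  have hlt : hfun u0 < hfun u1 := by
    rw [hval, hsum_eq, haz]
    have hq : ε * vp β z * (ε * ∑ γ ∈ Tf, f γ) = vp β z * ∑ γ ∈ Tf, f γ := by
      have : ε * vp β z * (ε * ∑ γ ∈ Tf, f γ) = (ε * ε) * (vp β z * ∑ γ ∈ Tf, f γ) := by ring
      rw [this, hε2, one_mul]
    rw [hq]
    nlinarith [mul_pos_of_neg_of_neg hneg (neg_neg_of_pos hsumT)]
  have hmem1 : hfun u1 ∈ A := ⟨u1, hu1, rfl⟩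
  have := ht0max hmem1 (by rw [ht0]; exact le_of_lt hlt)
  rw [ht0] at this
  simp only [id] at this
  exact absurd hlt (not_lt.mpr this)

end LemA

section Nfin
variable {pos : Finset (Module.Dual ℝ V)} {C : Set V} {cv : Module.Dual ℝ V → V}
  {r : Module.Dual ℝ V → ℤ → Equiv.Perm V}

/-- the inversion set of `g` -/
def Nset (pos : Finset (Module.Dual ℝ V)) (C : Set V) (g : Equiv.Perm V) :
    Set (Module.Dual ℝ V × ℤ) :=
  {p | Rt pos p ∧ (∀ x ∈ C, 0 < vp p x) ∧ (∀ x ∈ C, vp p (g⁻¹ x) < 0)}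

theorem N_finite
    (hC : C.Nonempty)
    (hCpos : ∀ a ∈ pos, ∀ x ∈ C, 0 < a x ∧ a x < 1)
    (hcv : ∀ a ∈ pos, a (cv a) = 2)
    (hcry : ∀ a ∈ pos, ∀ b : Module.Dual ℝ V, (b ∈ pos ∨ -b ∈ pos) → ∃ n : ℤ, b (cv a) = n)
    (hinv : ∀ a ∈ pos, ∀ b : Module.Dual ℝ V, (b ∈ pos ∨ -b ∈ pos) →
      ∃ c : Module.Dual ℝ V, (c ∈ pos ∨ -c ∈ pos) ∧ ∀ x : V, b x - a x * b (cv a) = c x)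
    (hr : ∀ a k (x : V), r a k x = x - (a x + (k : ℝ)) • cv a)
    {g : Equiv.Perm V} (hg : g ∈ Wgp pos r) :
    (Nset pos C g).Finite := by
  classical
  obtain ⟨x₀, hx₀⟩ := hC
  have hg' := mem_submonoid_of_mem_W hcv hr hg
  clear hg
  induction hg' using Submonoid.closure_induction with
  | one =>
      apply Set.Finite.subset Set.finite_empty
      rintro p ⟨hrt, hpos, hneg⟩
      have h1 := hpos x₀ hx₀
      have h2 := hneg x₀ hx₀
      simp only [inv_one, Equiv.Perm.one_apply] at h2
      exact absurd h1 (not_lt.mpr (le_of_lt h2))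
  | mem σ hσ =>
      obtain ⟨a, ha, k, rfl⟩ := hσ
      set x₁ := r a k x₀ with hx₁
      set M : ℝ := 1 + ∑ b ∈ pos, (|b x₀| + |b x₁|) with hM
      have hbound : ∀ b ∈ pos, |b x₀| + |b x₁| ≤ M - 1 := by
        intro b hb
        rw [hM]
        have := Finset.single_le_sum (f := fun b => |b x₀| + |b x₁|)
          (fun i _ => by positivity) hb
        simp only [add_sub_cancel_left]
        exact this
      apply Set.Finite.subset
        (Set.Finite.prod
          (Set.Finite.union pos.finite_toSet (pos.finite_toSet.image (fun a => -a)))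
          (Set.finite_Icc (-⌈M⌉) ⌈M⌉))
      rintro p ⟨hrt, hpos, hneg⟩
      have h1 := hpos x₀ hx₀
      have h2 := hneg x₀ hx₀
      rw [r_inv_eq hcv hr ha] at h2
      have habs : |p.1 x₀| + |p.1 x₁| ≤ M - 1 := by
        rcases hrt with h | h
        · exact hbound p.1 h
        · have := hbound (-p.1) h
          simp only [LinearMap.neg_apply, abs_neg] at this
          exact this
      have hp2M : |(p.2:ℝ)| ≤ M := by
        simp only [vp] at h1 h2
        rw [← hx₁] at h2
        rw [abs_le]
        constructor
        · have := le_abs_self (p.1 x₀)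
          nlinarith [abs_nonneg (p.1 x₀), abs_nonneg (p.1 x₁)]
        · have := neg_le_abs (p.1 x₁)
          nlinarith [abs_nonneg (p.1 x₀), abs_nonneg (p.1 x₁)]
      constructor
      · rcases hrt with h | h
        · exact Or.inl h
        · exact Or.inr ⟨-p.1, h, by simp⟩
      · rw [Set.mem_Icc]
        rw [abs_le] at hp2M
        constructor
        · have hcast : (-⌈M⌉ : ℝ) ≤ (p.2:ℝ) := le_trans (by simpa using neg_le_neg (Int.le_ceil M)) hp2M.1
          exact_mod_cast hcast
        · have hcast : (p.2:ℝ) ≤ (⌈M⌉ : ℝ) := le_trans hp2M.2 (Int.le_ceil M)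
          exact_mod_cast hcast
  | mul g h hgm hhm ihg ihh =>
      have hgW : g ∈ Wgp pos r := Subgroup.le_closure_toSubmonoid _ hgm
      have hhW : h ∈ Wgp pos r := Subgroup.le_closure_toSubmonoid _ hhm
      apply Set.Finite.subset (Set.Finite.union ihh (ihg.image (act pos h⁻¹)))
      rintro p ⟨hrt, hpos, hneg⟩
      set q := act pos h p with hq
      have hqrt : Rt pos q := act_rt hcv hcry hinv hr hhW hrt
      have hqvp : ∀ x, vp q x = vp p (h⁻¹ x) := act_vp hcv hcry hinv hr hhW hrt
      by_cases hqpos : PosC C q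
      · right
        refine ⟨q, ⟨hqrt, hqpos, ?_⟩, ?_⟩
        · intro x hx
          rw [hqvp (g⁻¹ x)]
          have := hneg x hx
          rw [mul_inv_rev] at this
          exact this
        · rw [hq]
          exact act_inv_act hcv hcry hinv hr hhW hrt
      · left
        have hqneg : NegC C q := negC_of_not_posC hCpos hqrt hqpos
        refine ⟨hrt, hpos, ?_⟩
        intro x hx
        rw [← hqvp x]
        exact hqneg x hx

end Nfin

section Facet
variable {pos : Finset (Module.Dual ℝ V)} {C : Set V}

theorem rt_neg {p : Module.Dual ℝ V × ℤ} (h : Rt pos p) : Rt pos (-p.1, -p.2) := by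
  rcases h with h | h
  · exact Or.inr (by simpa using h)
  · exact Or.inl (by simpa using h)

theorem vp_ne_at_C (hCpos : ∀ a ∈ pos, ∀ x ∈ C, 0 < a x ∧ a x < 1)
    {p : Module.Dual ℝ V × ℤ} (hp : Rt pos p) {x : V} (hx : x ∈ C) : vp p x ≠ 0 := by
  rcases posC_or_negC (C := C) hCpos hp with h | h
  · exact ne_of_gt (h x hx)
  · exact ne_of_lt (h x hx)

/-- positive roots not vanishing on a facet `K` in the closure are positive on `K` -/
theorem posC_posK {K : Set V} (hKne : K.Nonempty)
    (hKcl : ∀ (a : Module.Dual ℝ V) (k : ℤ), (a ∈ pos ∨ -a ∈ pos) →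
      (∀ x ∈ C, 0 < a x + (k : ℝ)) → ∀ x ∈ K, 0 ≤ a x + (k : ℝ))
    (hKsign : ∀ (a : Module.Dual ℝ V) (k : ℤ), (a ∈ pos ∨ -a ∈ pos) →
      (∀ x ∈ K, a x + (k : ℝ) = 0) ∨ (∀ x ∈ K, 0 < a x + (k : ℝ)) ∨
        (∀ x ∈ K, a x + (k : ℝ) < 0))
    {p : Module.Dual ℝ V × ℤ} (hp : Rt pos p) (hpos : PosC C p)
    (hnv : ¬ (∀ x ∈ K, vp p x = 0)) : ∀ x ∈ K, 0 < vp p x := by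
  have h0 : ∀ x ∈ K, 0 ≤ vp p x := hKcl p.1 p.2 hp hpos
  rcases hKsign p.1 p.2 hp with h | h | h
  · exact absurd h hnv
  · exact h
  · obtain ⟨x, hx⟩ := hKne
    exact absurd (h0 x hx) (not_le.mpr (h x hx))

/-- a root positive somewhere on a facet `K` in the closure is positive on `C` -/
theorem posK_posC
    (hCpos : ∀ a ∈ pos, ∀ x ∈ C, 0 < a x ∧ a x < 1)
    {K : Set V}
    (hKcl : ∀ (a : Module.Dual ℝ V) (k : ℤ), (a ∈ pos ∨ -a ∈ pos) →
      (∀ x ∈ C, 0 < a x + (k : ℝ)) → ∀ x ∈ K, 0 ≤ a x + (k : ℝ))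
    {p : Module.Dual ℝ V × ℤ} (hp : Rt pos p)
    (hpos : ∃ x ∈ K, 0 < vp p x) : PosC C p := by
  by_contra hcon
  have hneg : NegC C p := negC_of_not_posC hCpos hp hcon
  have hnp : PosC C (-p.1, -p.2) := by
    intro x hx
    have := hneg x hx
    simp only [vp, LinearMap.neg_apply, Int.cast_neg] at *
    linarith
  have := hKcl (-p.1) (-p.2) (rt_neg hp) hnp
  obtain ⟨x, hx, hxpos⟩ := hpos
  have h2 := this x hx
  simp only [LinearMap.neg_apply, Int.cast_neg] at h2
  simp only [vp] at hxpos
  linarith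

end Facet

section Split
variable {pos : Finset (Module.Dual ℝ V)} {C : Set V} {cv : Module.Dual ℝ V → V}
  {r : Module.Dual ℝ V → ℤ → Equiv.Perm V}

theorem len_split
    (hC : C.Nonempty)
    (hCpos : ∀ a ∈ pos, ∀ x ∈ C, 0 < a x ∧ a x < 1)
    (hcv : ∀ a ∈ pos, a (cv a) = 2)
    (hcry : ∀ a ∈ pos, ∀ b : Module.Dual ℝ V, (b ∈ pos ∨ -b ∈ pos) → ∃ n : ℤ, b (cv a) = n)
    (hinv : ∀ a ∈ pos, ∀ b : Module.Dual ℝ V, (b ∈ pos ∨ -b ∈ pos) →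
      ∃ c : Module.Dual ℝ V, (c ∈ pos ∨ -c ∈ pos) ∧ ∀ x : V, b x - a x * b (cv a) = c x)
    (hr : ∀ a k (x : V), r a k x = x - (a x + (k : ℝ)) • cv a)
    {F : Set V} (hFne : F.Nonempty)
    (hFcl : ∀ (a : Module.Dual ℝ V) (k : ℤ), (a ∈ pos ∨ -a ∈ pos) →
      (∀ x ∈ C, 0 < a x + (k : ℝ)) → ∀ x ∈ F, 0 ≤ a x + (k : ℝ))
    (hFsign : ∀ (a : Module.Dual ℝ V) (k : ℤ), (a ∈ pos ∨ -a ∈ pos) →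
      (∀ x ∈ F, a x + (k : ℝ) = 0) ∨ (∀ x ∈ F, 0 < a x + (k : ℝ)) ∨
        (∀ x ∈ F, a x + (k : ℝ) < 0))
    {g u' : Equiv.Perm V} (hg : g ∈ Wgp pos r) (hu' : u' ∈ WKgp pos r F) :
    affineLength pos C (g * u') =
      (Nset pos C (g * u') ∩ {p | ∀ x ∈ F, vp p x = 0}).ncard
        + (Nset pos C g \ {p | ∀ x ∈ F, vp p x = 0}).ncard := by
  have hu'W : u' ∈ Wgp pos r := wk_le_w _ hu'
  have hguW : g * u' ∈ Wgp pos r := mul_mem hg hu'W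
  set Vf : Set (Module.Dual ℝ V × ℤ) := {p | ∀ x ∈ F, vp p x = 0} with hVf
  have h1 : affineLength pos C (g * u') = (Nset pos C (g * u')).ncard := rfl
  rw [h1, ← Set.ncard_inter_add_ncard_diff_eq_ncard (Nset pos C (g * u')) Vf
    (N_finite hC hCpos hcv hcry hinv hr hguW)]
  congr 1
  have himg : act pos u' '' (Nset pos C (g * u') \ Vf) = Nset pos C g \ Vf := by
    apply Set.Subset.antisymm
    · rintro q ⟨p, ⟨⟨hrt, hposC, hneg⟩, hnvan⟩, rfl⟩
      have hvpF : ∀ x ∈ F, vp (act pos u' p) x = vp p x :=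
        act_vp_on_K hcv hcry hinv hr hu' hrt
      have hposF : ∀ x ∈ F, 0 < vp p x := posC_posK hFne hFcl hFsign hrt hposC hnvan
      obtain ⟨xF, hxF⟩ := hFne
      constructor
      · refine ⟨act_rt hcv hcry hinv hr hu'W hrt, ?_, ?_⟩
        · exact posK_posC hCpos hFcl (act_rt hcv hcry hinv hr hu'W hrt)
            ⟨xF, hxF, by rw [hvpF xF hxF]; exact hposF xF hxF⟩
        · intro x hx
          rw [act_vp hcv hcry hinv hr hu'W hrt]
          have := hneg x hx
          rw [mul_inv_rev] at this
          exact this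
      · intro hcon
        apply hnvan
        intro x hx
        rw [← hvpF x hx]
        exact hcon x hx
    · rintro q ⟨⟨hrt, hposC, hneg⟩, hnvan⟩
      have hrtp : Rt pos (act pos u'⁻¹ q) := act_rt hcv hcry hinv hr (inv_mem hu'W) hrt
      have hvpF : ∀ x ∈ F, vp (act pos u'⁻¹ q) x = vp q x :=
        act_vp_on_K hcv hcry hinv hr (inv_mem hu') hrt
      have hposF : ∀ x ∈ F, 0 < vp q x := posC_posK hFne hFcl hFsign hrt hposC hnvan
      obtain ⟨xF, hxF⟩ := hFne
      refine ⟨act pos u'⁻¹ q, ⟨⟨hrtp, ?_, ?_⟩, ?_⟩, act_act_inv hcv hcry hinv hr hu'W hrt⟩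
      · exact posK_posC hCpos hFcl hrtp ⟨xF, hxF, by rw [hvpF xF hxF]; exact hposF xF hxF⟩
      · intro x hx
        rw [act_vp hcv hcry hinv hr (inv_mem hu'W) hrt, inv_inv, mul_inv_rev]
        show vp q (u' ((u'⁻¹ * g⁻¹) x)) < 0
        have : u' ((u'⁻¹ * g⁻¹) x) = g⁻¹ x := by
          show u' (u'⁻¹ (g⁻¹ x)) = g⁻¹ x
          exact Equiv.apply_symm_apply u' (g⁻¹ x)
        rw [this]
        exact hneg x hx
      · intro hcon
        apply hnvan
        intro x hx
        rw [← hvpF x hx]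
        exact hcon x hx
  rw [← himg]
  rw [Set.ncard_image_of_injOn]
  intro p hp q hq hpq
  exact act_injOn hcv hcry hinv hr hu'W hp.1.1 hq.1.1 hpq

end Split

end Wald

open Wald


/-- **Waldspurger's lemma.** Let the affine Weyl group `W` of a reduced
root system act on the affine roots `Σ`, with fundamental alcove `C`, and let `F'`, `F` be
facets in the closure of `C` with parabolic subgroups `W_{F'}`, `W_F`.  For `w ∈ W`, the
length of the representative `{}_{F'}w^F` (the maximal-length element among the minimal
coset representatives `(vw)^F` for `v ∈ W_{F'}`) equals the number of affine roots
`α ∈ Σ \ Σ(F)` with `α(C) > 0` and `w(α)(F') ≤ 0`. -/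
theorem length_distinguished_rep_eq_card_affine_roots
    {V : Type*} [AddCommGroup V] [Module ℝ V]
    (pos : Finset (Module.Dual ℝ V)) (C : Set V)
    (hC : C.Nonempty)
    (hCpos : ∀ a ∈ pos, ∀ x ∈ C, 0 < a x ∧ a x < 1)
    (hred : ∀ a ∈ pos, (2 : ℝ) • a ∉ pos)
    (cv : Module.Dual ℝ V → V)
    (hcv : ∀ a ∈ pos, a (cv a) = 2)
    (hcry : ∀ a ∈ pos, ∀ b : Module.Dual ℝ V, (b ∈ pos ∨ -b ∈ pos) → ∃ n : ℤ, b (cv a) = n)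
    (hinv : ∀ a ∈ pos, ∀ b : Module.Dual ℝ V, (b ∈ pos ∨ -b ∈ pos) →
      ∃ c : Module.Dual ℝ V, (c ∈ pos ∨ -c ∈ pos) ∧ ∀ x : V, b x - a x * b (cv a) = c x)
    (r : Module.Dual ℝ V → ℤ → Equiv.Perm V)
    (hr : ∀ a k (x : V), r a k x = x - (a x + (k : ℝ)) • cv a)
    -- the facets `F` and `F'`, contained in the closure of the alcove `C`:
    (F F' : Set V) (hFne : F.Nonempty) (hF'ne : F'.Nonempty)
    (hFcl : ∀ (a : Module.Dual ℝ V) (k : ℤ), (a ∈ pos ∨ -a ∈ pos) →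
      (∀ x ∈ C, 0 < a x + (k : ℝ)) → ∀ x ∈ F, 0 ≤ a x + (k : ℝ))
    (hF'cl : ∀ (a : Module.Dual ℝ V) (k : ℤ), (a ∈ pos ∨ -a ∈ pos) →
      (∀ x ∈ C, 0 < a x + (k : ℝ)) → ∀ x ∈ F', 0 ≤ a x + (k : ℝ))
    (hFsign : ∀ (a : Module.Dual ℝ V) (k : ℤ), (a ∈ pos ∨ -a ∈ pos) →
      (∀ x ∈ F, a x + (k : ℝ) = 0) ∨ (∀ x ∈ F, 0 < a x + (k : ℝ)) ∨
        (∀ x ∈ F, a x + (k : ℝ) < 0))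
    (hF'sign : ∀ (a : Module.Dual ℝ V) (k : ℤ), (a ∈ pos ∨ -a ∈ pos) →
      (∀ x ∈ F', a x + (k : ℝ) = 0) ∨ (∀ x ∈ F', 0 < a x + (k : ℝ)) ∨
        (∀ x ∈ F', a x + (k : ℝ) < 0))
    (w m : Equiv.Perm V)
    (hw : w ∈ Subgroup.closure {σ : Equiv.Perm V | ∃ a ∈ pos, ∃ k : ℤ, σ = r a k})
    -- `m` is a minimal-length representative `(vw)^F` for some `v ∈ W_{F'}` …
    (hm : ∃ v ∈ Subgroup.closure {σ : Equiv.Perm V |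
        ∃ a ∈ pos, ∃ k : ℤ, (∀ x ∈ F', a x + (k : ℝ) = 0) ∧ σ = r a k},
      (∃ u ∈ Subgroup.closure {σ : Equiv.Perm V |
          ∃ a ∈ pos, ∃ k : ℤ, (∀ x ∈ F, a x + (k : ℝ) = 0) ∧ σ = r a k}, m = v * w * u) ∧
      ∀ u ∈ Subgroup.closure {σ : Equiv.Perm V |
          ∃ a ∈ pos, ∃ k : ℤ, (∀ x ∈ F, a x + (k : ℝ) = 0) ∧ σ = r a k},
        affineLength pos C m ≤ affineLength pos C (v * w * u))
    -- … of maximal length among all such minimal representatives: `m = {}_{F'}w^F`.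
    (hmax : ∀ m' : Equiv.Perm V,
      (∃ v ∈ Subgroup.closure {σ : Equiv.Perm V |
          ∃ a ∈ pos, ∃ k : ℤ, (∀ x ∈ F', a x + (k : ℝ) = 0) ∧ σ = r a k},
        (∃ u ∈ Subgroup.closure {σ : Equiv.Perm V |
            ∃ a ∈ pos, ∃ k : ℤ, (∀ x ∈ F, a x + (k : ℝ) = 0) ∧ σ = r a k}, m' = v * w * u) ∧
        ∀ u ∈ Subgroup.closure {σ : Equiv.Perm V |
            ∃ a ∈ pos, ∃ k : ℤ, (∀ x ∈ F, a x + (k : ℝ) = 0) ∧ σ = r a k},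
          affineLength pos C m' ≤ affineLength pos C (v * w * u)) →
      affineLength pos C m' ≤ affineLength pos C m) :
    affineLength pos C m = Set.ncard {p : Module.Dual ℝ V × ℤ |
      (p.1 ∈ pos ∨ -p.1 ∈ pos) ∧
      ¬ (∀ x ∈ F, p.1 x + (p.2 : ℝ) = 0) ∧
      (∀ x ∈ C, 0 < p.1 x + (p.2 : ℝ)) ∧
      (∀ x ∈ F', p.1 (w⁻¹ x) + (p.2 : ℝ) ≤ 0)} := by
  classical
  obtain ⟨x₀, hx₀⟩ := hC
  obtain ⟨xF', hxF'⟩ := hF'ne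
  obtain ⟨v, hv, ⟨u, hu, hmvu⟩, hmin⟩ := hm
  have hwW : w ∈ Wgp pos r := hw
  have hv' : v ∈ WKgp pos r F' := hv
  have hu' : u ∈ WKgp pos r F := hu
  set Vf : Set (Module.Dual ℝ V × ℤ) := {p | ∀ x ∈ F, vp p x = 0} with hVfdef
  set Rset : Set (Module.Dual ℝ V × ℤ) := {p | Rt pos p ∧ ¬ (∀ x ∈ F, vp p x = 0) ∧
    PosC C p ∧ ∀ x ∈ F', vp p (w⁻¹ x) ≤ 0} with hRdef
  show affineLength pos C m = Rset.ncard
  -- length of a representative v' * w * u'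
  have hlen : ∀ v', v' ∈ WKgp pos r F' → ∀ u', u' ∈ WKgp pos r F →
      affineLength pos C (v' * w * u') =
        (Nset pos C (v' * w * u') ∩ Vf).ncard + (Nset pos C (v' * w) \ Vf).ncard := by
    intro v' hv'' u' hu''
    exact len_split ⟨x₀, hx₀⟩ hCpos hcv hcry hinv hr hFne hFcl hFsign
      (mul_mem (wk_le_w _ hv'') hwW) hu''
  -- existence of a minimal-length representative: the `Vf`-part can be made empty
  have hminrep : ∀ v', v' ∈ WKgp pos r F' →
      ∃ u₀ ∈ WKgp pos r F, Nset pos C (v' * w * u₀) ∩ Vf = ∅ := by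
    intro v' hv''
    have hv'W : v' * w ∈ Wgp pos r := mul_mem (wk_le_w _ hv'') hwW
    have hy : ∀ p : Module.Dual ℝ V × ℤ, Rt pos p → (∀ x ∈ F, vp p x = 0) →
        vp p ((v' * w)⁻¹ x₀) ≠ 0 := by
      intro p hp _
      rw [← act_vp hcv hcry hinv hr hv'W hp x₀]
      exact vp_ne_at_C hCpos (act_rt hcv hcry hinv hr hv'W hp) hx₀
    obtain ⟨u₀, hu₀, hpos₀⟩ := lemmaA ⟨x₀, hx₀⟩ hCpos hcv hcry hinv hr hFne
      ((v' * w)⁻¹ x₀) hy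
    refine ⟨u₀, hu₀, ?_⟩
    rw [Set.eq_empty_iff_forall_notMem]
    rintro p ⟨⟨hrt, hposC, hneg⟩, hvan⟩
    have h1 := hpos₀ p hrt hvan hposC
    have h2 := hneg x₀ hx₀
    have h3 : (v' * w * u₀)⁻¹ x₀ = u₀⁻¹ ((v' * w)⁻¹ x₀) := by
      rw [mul_inv_rev]; rfl
    rw [h3] at h2
    linarith
  -- the length of `m`
  have hlenm : affineLength pos C m = (Nset pos C (v * w) \ Vf).ncard := by
    obtain ⟨u₀, hu₀, hempty⟩ := hminrep v hv'
    have hle1 : affineLength pos C m ≤ (Nset pos C (v * w) \ Vf).ncard := by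
      have := hmin u₀ hu₀
      rw [hlen v hv' u₀ hu₀, hempty, Set.ncard_empty, zero_add] at this
      exact this
    have hge1 : (Nset pos C (v * w) \ Vf).ncard ≤ affineLength pos C m := by
      rw [hmvu, hlen v hv' u hu']
      exact Nat.le_add_left _ _
    exact le_antisymm hle1 hge1
  -- SF' and Rset finiteness
  have hRfin : Rset.Finite := by
    apply Set.Finite.subset (Set.Finite.union
      (N_finite ⟨x₀, hx₀⟩ hCpos hcv hcry hinv hr hwW)
      ((van_finite (pos := pos) (K := F') ⟨xF', hxF'⟩).image (act pos w⁻¹)))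
    rintro p ⟨hrt, hnvan, hposC, hle⟩
    have hqrt : Rt pos (act pos w p) := act_rt hcv hcry hinv hr hwW hrt
    have hqvp : ∀ x, vp (act pos w p) x = vp p (w⁻¹ x) :=
      act_vp hcv hcry hinv hr hwW hrt
    rcases hF'sign (act pos w p).1 (act pos w p).2 hqrt with hcase | hcase | hcase
    · right
      exact ⟨act pos w p, ⟨hqrt, hcase⟩, act_inv_act hcv hcry hinv hr hwW hrt⟩
    · exfalso
      have h1 := hcase xF' hxF'
      have h2 := hle xF' hxF'
      rw [← hqvp xF'] at h2
      exact absurd h2 (not_le.mpr h1)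
    · left
      have hnq : ¬ PosC C (act pos w p) := by
        intro hcon
        have := hF'cl (act pos w p).1 (act pos w p).2 hqrt hcon xF' hxF'
        exact absurd this (not_le.mpr (hcase xF' hxF'))
      have hnegq : NegC C (act pos w p) := negC_of_not_posC hCpos hqrt hnq
      refine ⟨hrt, hposC, fun x hx => ?_⟩
      rw [← hqvp x]
      exact hnegq x hx
  -- any `Nset (v'*w) \ Vf` is contained in `Rset`
  have hAsub : ∀ v', v' ∈ WKgp pos r F' → Nset pos C (v' * w) \ Vf ⊆ Rset := by
    intro v' hv'' p hp
    obtain ⟨⟨hrt, hposC, hneg⟩, hnvan⟩ := hp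
    have hv'W : v' * w ∈ Wgp pos r := mul_mem (wk_le_w _ hv'') hwW
    refine ⟨hrt, hnvan, hposC, ?_⟩
    intro x hx
    have hqrt : Rt pos (act pos (v' * w) p) := act_rt hcv hcry hinv hr hv'W hrt
    have hqvp : ∀ z, vp (act pos (v' * w) p) z = vp p ((v' * w)⁻¹ z) :=
      act_vp hcv hcry hinv hr hv'W hrt
    have hnegq : NegC C (act pos (v' * w) p) := by
      intro z hz
      rw [hqvp z]
      exact hneg z hz
    have hposneg : PosC C (-(act pos (v' * w) p).1, -(act pos (v' * w) p).2) := by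
      intro z hz
      have := hnegq z hz
      simp only [vp, LinearMap.neg_apply, Int.cast_neg] at *
      linarith
    have hcl := hF'cl (-(act pos (v' * w) p).1) (-(act pos (v' * w) p).2)
      (rt_neg hqrt) hposneg x hx
    simp only [LinearMap.neg_apply, Int.cast_neg] at hcl
    have hqle : vp (act pos (v' * w) p) x ≤ 0 := by
      simp only [vp]; linarith
    rw [hqvp x] at hqle
    have hfix : (v' * w)⁻¹ x = w⁻¹ x := by
      rw [mul_inv_rev]
      show w⁻¹ (v'⁻¹ x) = w⁻¹ x
      rw [wk_fix hr (inv_mem hv'') x hx]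
    rwa [hfix] at hqle
  -- construct the maximizing v⋆
  set ζ : V := (2:ℝ) • (w⁻¹ xF') - x₀ with hζdef
  set y : V := w ζ with hydef
  have hvpζ : ∀ p : Module.Dual ℝ V × ℤ, vp p ζ = 2 * vp p (w⁻¹ xF') - vp p x₀ := by
    intro p
    simp only [vp, hζdef, map_sub, map_smul, smul_eq_mul]
    ring
  have hy : ∀ p : Module.Dual ℝ V × ℤ, Rt pos p → (∀ x ∈ F', vp p x = 0) →
      vp p y ≠ 0 := by
    intro p hp hvan
    have hδrt : Rt pos (act pos w⁻¹ p) := act_rt hcv hcry hinv hr (inv_mem hwW) hp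
    have hδvp : ∀ z, vp (act pos w⁻¹ p) z = vp p (w z) := by
      intro z
      rw [act_vp hcv hcry hinv hr (inv_mem hwW) hp, inv_inv]
    have h1 : vp p y = vp (act pos w⁻¹ p) ζ := by rw [hδvp ζ, hydef]
    have h2 : vp (act pos w⁻¹ p) (w⁻¹ xF') = 0 := by
      rw [hδvp (w⁻¹ xF'), Equiv.Perm.coe_inv, Equiv.apply_symm_apply]
      exact hvan xF' hxF'
    rw [h1, hvpζ (act pos w⁻¹ p), h2]
    simp only [mul_zero, zero_sub, ne_eq, neg_eq_zero]
    exact vp_ne_at_C hCpos hδrt hx₀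
  obtain ⟨g₀, hg₀, hpos₀⟩ := lemmaA ⟨x₀, hx₀⟩ hCpos hcv hcry hinv hr
    (K := F') ⟨xF', hxF'⟩ y hy
  set v₁ : Equiv.Perm V := g₀⁻¹ with hv₁def
  have hv₁ : v₁ ∈ WKgp pos r F' := inv_mem hg₀
  have hv₁W : v₁ * w ∈ Wgp pos r := mul_mem (wk_le_w _ hv₁) hwW
  -- Rset ⊆ Nset (v₁ * w) \ Vf
  have hRsub : Rset ⊆ Nset pos C (v₁ * w) \ Vf := by
    rintro p ⟨hrt, hnvan, hposC, hle⟩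
    have hqrt : Rt pos (act pos w p) := act_rt hcv hcry hinv hr hwW hrt
    have hqvp : ∀ z, vp (act pos w p) z = vp p (w⁻¹ z) := act_vp hcv hcry hinv hr hwW hrt
    set q' : Module.Dual ℝ V × ℤ := act pos v₁ (act pos w p) with hq'def
    have hq'rt : Rt pos q' := act_rt hcv hcry hinv hr (wk_le_w _ hv₁) hqrt
    have hq'vp : ∀ z, vp q' z = vp p ((v₁ * w)⁻¹ z) := by
      intro z
      rw [hq'def, act_vp hcv hcry hinv hr (wk_le_w _ hv₁) hqrt, hqvp, mul_inv_rev]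
      rfl
    have hq'neg : NegC C q' := by
      apply negC_of_not_posC hCpos hq'rt
      intro hq'pos
      rcases hF'sign (act pos w p).1 (act pos w p).2 hqrt with hcase | hcase | hcase
      · -- act w p vanishes on F'
        have hq'van : ∀ x ∈ F', vp q' x = 0 := by
          intro x hx
          rw [hq'def, act_vp_on_K hcv hcry hinv hr hv₁ hqrt x hx]
          exact hcase x hx
        have h1 := hpos₀ q' hq'rt hq'van hq'pos
        have h2 : act pos g₀ q' = act pos w p := by
          rw [hq'def, hv₁def]
          exact act_act_inv hcv hcry hinv hr (wk_le_w _ hg₀) hqrt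
        have h3 : vp q' (g₀⁻¹ y) = vp (act pos g₀ q') y := by
          rw [act_vp hcv hcry hinv hr (wk_le_w _ hg₀) hq'rt]
        rw [h3, h2] at h1
        have h4 : vp (act pos w p) y = vp p ζ := by
          rw [hqvp, hydef, Equiv.Perm.coe_inv, Equiv.symm_apply_apply]
        have h5 : vp p (w⁻¹ xF') = 0 := by
          rw [← hqvp xF']
          exact hcase xF' hxF'
        rw [h4, hvpζ p, h5] at h1
        have h6 := hposC x₀ hx₀
        linarith
      · have h1 := hcase xF' hxF'
        have h2 := hle xF' hxF'
        rw [← hqvp xF'] at h2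
        exact absurd h2 (not_le.mpr h1)
      · have h1 : vp q' xF' < 0 := by
          rw [hq'def, act_vp_on_K hcv hcry hinv hr hv₁ hqrt xF' hxF']
          exact hcase xF' hxF'
        have h2 := hF'cl q'.1 q'.2 hq'rt hq'pos xF' hxF'
        exact absurd h2 (not_le.mpr h1)
    exact ⟨⟨hrt, hposC, fun x hx => by rw [← hq'vp x]; exact hq'neg x hx⟩, hnvan⟩
  -- a minimal-length representative for v₁
  have hLne : ∃ n : ℕ, ∃ u'' ∈ WKgp pos r F, n = affineLength pos C (v₁ * w * u'') :=
    ⟨affineLength pos C (v₁ * w * 1), 1, one_mem _, rfl⟩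
  set L : Set ℕ := {n | ∃ u'' ∈ WKgp pos r F, n = affineLength pos C (v₁ * w * u'')} with hLdef
  obtain ⟨u₁, hu₁, hu₁val⟩ := Nat.sInf_mem hLne
  have hu₁min : ∀ u'' ∈ WKgp pos r F,
      affineLength pos C (v₁ * w * u₁) ≤ affineLength pos C (v₁ * w * u'') := by
    intro u'' hu''
    rw [← hu₁val]
    exact Nat.sInf_le ⟨u'', hu'', rfl⟩
  have hm'le : affineLength pos C (v₁ * w * u₁) ≤ affineLength pos C m :=
    hmax (v₁ * w * u₁) ⟨v₁, hv₁, ⟨u₁, hu₁, rfl⟩, hu₁min⟩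
  -- wrap up
  have hAs_v₁_fin : (Nset pos C (v₁ * w) \ Vf).Finite :=
    (N_finite ⟨x₀, hx₀⟩ hCpos hcv hcry hinv hr hv₁W).subset Set.diff_subset
  have hfinal1 : affineLength pos C m ≤ Rset.ncard := by
    rw [hlenm]
    exact Set.ncard_le_ncard (hAsub v hv') hRfin
  have hfinal2 : Rset.ncard ≤ affineLength pos C m := by
    have h1 : Rset.ncard ≤ (Nset pos C (v₁ * w) \ Vf).ncard :=
      Set.ncard_le_ncard hRsub hAs_v₁_fin
    have h2 : (Nset pos C (v₁ * w) \ Vf).ncard ≤ affineLength pos C (v₁ * w * u₁) := by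
      rw [hlen v₁ hv₁ u₁ hu₁]
      exact Nat.le_add_left _ _
    exact le_trans h1 (le_trans h2 hm'le)
  exact le_antisymm hfinal1 hfinal2
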